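/- For any finite set {O₁,…,O_k} of irreflexive graphs, the avoidance class Av(O₁,…,O_k) = {G irreflexive : no O_i is a surjective homomorphic image of G} is not well quasi-ordered under the surjective homomorphism ordering. -/

import Mathlib

/-- A finite structure with a single binary relation (digraph/graph model). -/
structure FinBinRel where
  n : ℕ
  rel : Fin n → Fin n → Prop

/-- `f` is a homomorphism from `A` to `B`: it maps related pairs to related pairs. -/
def IsHom (A B : FinBinRel) (f : Fin A.n → Fin B.n) : Prop :=
  ∀ x y, A.rel x y → B.rel (f x) (f y)

/-- `f` is a strong homomorphism: a homomorphism such that every related pair of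
elements of the image is the image of a related pair. -/
def IsStrongHom (A B : FinBinRel) (f : Fin A.n → Fin B.n) : Prop :=
  IsHom A B f ∧
    ∀ p q : Fin B.n, B.rel p q → (∃ a, f a = p) → (∃ b, f b = q) →
      ∃ u v, A.rel u v ∧ f u = p ∧ f v = q

/-- Homomorphic image ordering: `A ⪯ B` iff there is a surjective homomorphism `B → A`. -/
def HomLe (A B : FinBinRel) : Prop :=
  ∃ f : Fin B.n → Fin A.n, Function.Surjective f ∧ IsHom B A f

/-- Strong homomorphic image ordering: `A ⪯ B` iff there is a surjective strong
homomorphism `B → A`. -/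
def StrongLe (A B : FinBinRel) : Prop :=
  ∃ f : Fin B.n → Fin A.n, Function.Surjective f ∧ IsStrongHom B A f

/-- Isomorphism of binary relational structures. -/
def BinIso (A B : FinBinRel) : Prop :=
  ∃ e : Fin A.n ≃ Fin B.n, ∀ x y, A.rel x y ↔ B.rel (e x) (e y)

/-- A class `C` is well quasi-ordered by `r`: every infinite sequence of members of `C`
contains a "good pair". (For orderings on finite structures respecting size this is
equivalent to having no infinite antichain.) -/
def IsWqo (r : FinBinRel → FinBinRel → Prop) (C : Set FinBinRel) : Prop :=
  ∀ f : ℕ → FinBinRel, (∀ i, f i ∈ C) → ∃ i j, i < j ∧ r (f i) (f j)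

/-- A reflexive graph: symmetric relation with a loop at every vertex. -/
def ReflGraph (A : FinBinRel) : Prop :=
  (∀ x, A.rel x x) ∧ (∀ x y, A.rel x y → A.rel y x)

/-- An irreflexive graph: symmetric and loopless. -/
def IrrGraph (A : FinBinRel) : Prop :=
  (∀ x, ¬ A.rel x x) ∧ (∀ x y, A.rel x y → A.rel y x)

/-- The irreflexive complete graph on `n` vertices. -/
def Kirr (n : ℕ) : FinBinRel := ⟨n, fun i j => i ≠ j⟩

/-- The complete reflexive graph/digraph on `n` vertices (all pairs, including loops). -/
def Kcompl (n : ℕ) : FinBinRel := ⟨n, fun _ _ => True⟩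

/-- The subcomplete reflexive graph `N_{n,k}` (for `2k ≤ n`): the complete reflexive
graph on `n` vertices with the `k` disjoint edges `{0,1},{2,3},…,{2k-2,2k-1}` deleted. -/
def Ngraph (n k : ℕ) : FinBinRel :=
  ⟨n, fun i j => ¬ ∃ m, m < k ∧
      ((i.val = 2 * m ∧ j.val = 2 * m + 1) ∨ (j.val = 2 * m ∧ i.val = 2 * m + 1))⟩

/-- The subcomplete digraph `N⃗_{n,k}` (for `2k ≤ n`): the complete reflexive digraph
on `n` vertices with the `k` disjoint directed edges `(0,1),(2,3),…,(2k-2,2k-1)` removed. -/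
def Ndigraph (n k : ℕ) : FinBinRel :=
  ⟨n, fun i j => ¬ ∃ m, m < k ∧ i.val = 2 * m ∧ j.val = 2 * m + 1⟩

/-- `D` has a set of `k` pairwise disjoint edges (all `2k` endpoints distinct). -/
def HasDisjointEdges (D : FinBinRel) (k : ℕ) : Prop :=
  ∃ a b : Fin k → Fin D.n,
    Function.Injective (Sum.elim a b) ∧ ∀ i, D.rel (a i) (b i)


lemma kirr_irr (n : ℕ) : IrrGraph (Kirr n) :=
  ⟨fun x h => h rfl, fun x y h => Ne.symm h⟩

lemma hom_kirr_inj (n : ℕ) (B : FinBinRel) (hB : IrrGraph B)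
    (f : Fin n → Fin B.n) (hf : IsHom (Kirr n) B f) : Function.Injective f := by
  intro x y hxy
  by_contra hne
  exact hB.1 (f x) (by simpa [hxy] using hf x y (by simpa [Kirr] using hne))

/-- No class of irreflexive graphs defined by finitely many obstructions under the
surjective homomorphism ordering is well quasi-ordered. -/
theorem stmt_7 (k : ℕ) (O : Fin k → FinBinRel) (hO : ∀ i, IrrGraph (O i)) :
    ¬ IsWqo HomLe {G | IrrGraph G ∧ ∀ i, ¬ HomLe (O i) G} := by
  intro hwqo
  set N : ℕ := (Finset.univ.sup fun i => (O i).n) + 1 with hN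
  obtain ⟨i, j, hij, f, hsurj, hhom⟩ := hwqo (fun m => Kirr (N + m)) (by
    intro m
    refine ⟨kirr_irr _, ?_⟩
    intro i ⟨g, hg, hgh⟩
    have hinj := hom_kirr_inj _ _ (hO i) g hgh
    have := Fintype.card_le_of_injective g hinj
    rw [Fintype.card_fin] at this
    simp only [Kirr, Fintype.card_fin] at this
    have hle : (O i).n ≤ Finset.univ.sup fun i => (O i).n :=
      Finset.le_sup (f := fun i => (O i).n) (Finset.mem_univ i)
    omega)
  have hinj := hom_kirr_inj _ _ (kirr_irr _) f hhom
  have := Fintype.card_le_of_injective f hinj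
  rw [Fintype.card_fin, Fintype.card_fin] at this
  simp only [Kirr, Fintype.card_fin] at this
  omega
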